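/- Fundamental theorem of (P,ω)-partitions: for a finite poset P on a vertex set V of size n and a bijection ω : V → [n], the set of (P,ω)-partitions is the disjoint union over linear extensions π : V → [n] of P of the sets A(π, Des(ω ∘ π⁻¹)). -/

import Mathlib

/-- The (0-indexed) descent set of a map `g : Fin n → Fin n`. -/
def desSetF (n : ℕ) (g : Fin n → Fin n) : Set ℕ :=
  {i | ∃ h : i + 1 < n, g ⟨i + 1, h⟩ < g ⟨i, Nat.lt_of_succ_lt h⟩}

/-- `f ∈ A(π, S)` for a labeling `π : V ≃ Fin n`: `f` is weakly increasing along
`π⁻¹(0), …, π⁻¹(n-1)`, strictly from position `i` to `i+1` whenever `i ∈ S`. -/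
def inAV {V : Type} (n : ℕ) (π : V ≃ Fin n) (S : Set ℕ) (f : V → ℕ) : Prop :=
  ∀ i : ℕ, ∀ h : i + 1 < n,
    f (π.symm ⟨i, Nat.lt_of_succ_lt h⟩) ≤ f (π.symm ⟨i + 1, h⟩) ∧
    (i ∈ S → f (π.symm ⟨i, Nat.lt_of_succ_lt h⟩) < f (π.symm ⟨i + 1, h⟩))

/-- Key lemma: if `f ∈ A(π, Des(ω ∘ π⁻¹))` then the "key" map
`i ↦ (f (π⁻¹ i), ω (π⁻¹ i))` is strictly monotone for the lexicographic order. -/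
theorem keyStrictMono {V : Type} (n : ℕ) (ω : V ≃ Fin n) (f : V → ℕ) (π : V ≃ Fin n)
    (hA : inAV n π (desSetF n (⇑ω ∘ ⇑π.symm)) f) :
    StrictMono (fun i : Fin n => toLex (f (π.symm i), ω (π.symm i))) := by
  cases n with
  | zero => exact fun i => absurd i.isLt (by omega)
  | succ m =>
    rw [Fin.strictMono_iff_lt_succ]
    intro i
    have h : (i : ℕ) + 1 < m + 1 := by omega
    have hc : (⟨(i : ℕ), Nat.lt_of_succ_lt h⟩ : Fin (m + 1)) = Fin.castSucc i := rfl
    have hs : (⟨(i : ℕ) + 1, h⟩ : Fin (m + 1)) = i.succ := rfl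
    obtain ⟨hle, hdes⟩ := hA (i : ℕ) h
    rw [hc, hs] at hle hdes
    set x := π.symm (Fin.castSucc i) with hx
    set y := π.symm i.succ with hy
    rw [Prod.Lex.lt_iff]
    rcases lt_or_eq_of_le hle with hlt | heq
    · exact Or.inl hlt
    · refine Or.inr ⟨heq, ?_⟩
      have hxy : x ≠ y := by
        intro hxyeq
        have := π.symm.injective hxyeq
        simp [Fin.ext_iff] at this
      have hωne : ω x ≠ ω y := fun hc => hxy (ω.injective hc)
      rcases lt_or_gt_of_ne hωne with h1 | h1
      · exact h1
      · exfalso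
        have hmem : (i : ℕ) ∈ desSetF (m + 1) (⇑ω ∘ ⇑π.symm) := by
          refine ⟨h, ?_⟩
          simpa [hc, hs, Function.comp] using h1
        exact absurd (hdes hmem) (by omega)

theorem fromLinExt {V : Type} (n : ℕ) (ω : V ≃ Fin n) (f : V → ℕ) (π : V ≃ Fin n)
    (hA : inAV n π (desSetF n (⇑ω ∘ ⇑π.symm)) f) {x y : V} (hxy : π x < π y) :
    f x < f y ∨ (f x = f y ∧ ω x < ω y) := by
  have := keyStrictMono n ω f π hA hxy
  simp only [Equiv.symm_apply_apply] at this
  rw [Prod.Lex.lt_iff] at this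
  exact this

/-- Uniqueness: two labelings satisfying the `A(π, Des)` condition coincide. -/
theorem pi_unique {V : Type} (n : ℕ) (ω : V ≃ Fin n) (f : V → ℕ) (π π' : V ≃ Fin n)
    (hA : inAV n π (desSetF n (⇑ω ∘ ⇑π.symm)) f)
    (hA' : inAV n π' (desSetF n (⇑ω ∘ ⇑π'.symm)) f) : π = π' := by
  have hsm := keyStrictMono n ω f π hA
  have hsm' := keyStrictMono n ω f π' hA'
  have hinj : Function.Injective (fun x : V => toLex ((f x, ω x) : ℕ × Fin n)) := by
    intro a b hab
    have : ((f a, ω a) : ℕ × Fin n) = (f b, ω b) := congrArg ofLex hab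
    exact ω.injective (congrArg Prod.snd this)
  have r1 : (Set.range fun i : Fin n => toLex ((f (π.symm i), ω (π.symm i)) : ℕ × Fin n))
      = Set.range (fun x : V => toLex ((f x, ω x) : ℕ × Fin n)) := by
    rw [show (fun i : Fin n => toLex ((f (π.symm i), ω (π.symm i)) : ℕ × Fin n))
        = (fun x : V => toLex ((f x, ω x) : ℕ × Fin n)) ∘ ⇑π.symm from rfl]
    exact π.symm.surjective.range_comp _
  have r2 : (Set.range fun i : Fin n => toLex ((f (π'.symm i), ω (π'.symm i)) : ℕ × Fin n))
      = Set.range (fun x : V => toLex ((f x, ω x) : ℕ × Fin n)) := by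
    rw [show (fun i : Fin n => toLex ((f (π'.symm i), ω (π'.symm i)) : ℕ × Fin n))
        = (fun x : V => toLex ((f x, ω x) : ℕ × Fin n)) ∘ ⇑π'.symm from rfl]
    exact π'.symm.surjective.range_comp _
  haveI : WellFoundedLT (Fin n) := inferInstance
  have heqfun := (hsm.range_inj hsm').mp (r1.trans r2.symm)
  have hsymm : π.symm = π'.symm := Equiv.ext fun i => hinj (congrFun heqfun i)
  have := congrArg Equiv.symm hsymm
  simpa using this

/-- **Fundamental theorem of `(P,ω)`-partitions.** For a finite strict
partial order `lt` on a set `V` of size `n` and a bijection `ω : V ≃ Fin n`, a map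
`f : V → ℕ` is a `(P,ω)`-partition iff it lies in exactly one of the sets
`A(π, Des(ω ∘ π⁻¹))` with `π` a linear extension of `P`. -/
theorem fundamental_Pomega {V : Type} [Fintype V] (n : ℕ) (hn : Fintype.card V = n)
    (lt : V → V → Prop) (hlt : IsStrictOrder V lt) (ω : V ≃ Fin n) (f : V → ℕ) :
    ((∀ x y, lt x y → f x ≤ f y) ∧ (∀ x y, lt x y → ω y < ω x → f x < f y)) ↔
      ∃! π : V ≃ Fin n, (∀ x y, lt x y → π x < π y) ∧
        inAV n π (desSetF n (⇑ω ∘ ⇑π.symm)) f := by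
  constructor
  · rintro ⟨h1, h2⟩
    -- order V lexicographically by (f x, ω x)
    have hinj : Function.Injective (fun x : V => toLex ((f x, ω x) : ℕ × Fin n)) := by
      intro a b hab
      have : ((f a, ω a) : ℕ × Fin n) = (f b, ω b) := congrArg ofLex hab
      exact ω.injective (congrArg Prod.snd this)
    letI : LinearOrder V := LinearOrder.lift' (fun x : V => toLex ((f x, ω x) : ℕ × Fin n)) hinj
    have hltiff : ∀ a b : V, a < b ↔ (f a < f b ∨ (f a = f b ∧ ω a < ω b)) := by
      intro a b
      exact (Prod.Lex.lt_iff : toLex ((f a, ω a) : ℕ × Fin n) < toLex ((f b, ω b) : ℕ × Fin n) ↔ _)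
    -- lt x y implies x < y in the new order
    have hstep : ∀ x y : V, lt x y → x < y := by
      intro x y hxy
      rw [hltiff]
      rcases lt_or_eq_of_le (h1 x y hxy) with hlt' | heq
      · exact Or.inl hlt'
      · refine Or.inr ⟨heq, ?_⟩
        have hne : x ≠ y := fun h => hlt.irrefl x (h ▸ hxy)
        have hωne : ω x ≠ ω y := fun hc => hne (ω.injective hc)
        rcases lt_or_gt_of_ne hωne with h' | h'
        · exact h'
        · exact absurd (h2 x y hxy h') (by omega)
    set e := monoEquivOfFin V hn with he
    set π : V ≃ Fin n := e.toEquiv.symm with hπ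
    have hπsymm : ∀ i : Fin n, π.symm i = e i := fun i => rfl
    have hAπ : inAV n π (desSetF n (⇑ω ∘ ⇑π.symm)) f := by
      intro i h
      have hlt2 : π.symm ⟨i, Nat.lt_of_succ_lt h⟩ < π.symm ⟨i + 1, h⟩ := by
        rw [hπsymm, hπsymm]
        exact e.strictMono (by simp [Fin.lt_def])
      rw [hltiff] at hlt2
      constructor
      · rcases hlt2 with h' | ⟨h', _⟩ <;> omega
      · intro hmem
        obtain ⟨h', hdes⟩ := hmem
        have hdes' : ω (π.symm ⟨i + 1, h⟩) < ω (π.symm ⟨i, Nat.lt_of_succ_lt h⟩) := hdes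
        rcases hlt2 with h'' | ⟨_, h''⟩
        · exact h''
        · exact absurd h'' (by omega)
    refine ⟨π, ⟨?_, hAπ⟩, ?_⟩
    · intro x y hxy
      exact e.symm.strictMono (hstep x y hxy)
    · intro π' ⟨hext', hA'⟩
      exact (pi_unique n ω f π π' hAπ hA').symm
  · rintro ⟨π, ⟨hext, hA⟩, _⟩
    constructor
    · intro x y hxy
      rcases fromLinExt n ω f π hA (hext x y hxy) with h' | ⟨h', _⟩ <;> omega
    · intro x y hxy hω
      rcases fromLinExt n ω f π hA (hext x y hxy) with h' | ⟨_, h'⟩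
      · exact h'
      · exact absurd h' (by omega)
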